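/- Let P, Q, L, M, N be natural numbers with L ≤ P, M ≤ Q, let s : ℤ × ℤ × ℤ → ℝ, and let H : ℤ × ℤ × ℤ → ℝ vanish outside the index range 0 ≤ x < L, 0 ≤ y < M, 0 ≤ t < N. Fix integers l, m, n with 0 ≤ l ≤ P − L and 0 ≤ m ≤ Q − M, and define c(l, m, n) = Σ_{t=0}^{N−1} Σ_{y=0}^{M−1} Σ_{x=0}^{L−1} s(l + x, m + y, n + t)·H(x, y, t). For each t < N let S_{n+t}, H^{l,m,t} ∈ ℝ^{(Fin P × Fin Q)} be given by S_{n+t}(α, β) = s(α, β, n + t) and H^{l,m,t}(α, β) = H(α − l, β − m, t), and assume ‖S_{n+t}‖ ≤ 1 and ‖H^{l,m,t}‖ ≤ 1. Let φ : ℝ^{(Fin P × Fin Q)} → ℝ^K be a linear map and let 0 < ε < 1 be such that for every t < N, (1 − ε)·‖S_{n+t} ± H^{l,m,t}‖² ≤ ‖φ(S_{n+t}) ± φ(H^{l,m,t})‖² ≤ (1 + ε)·‖S_{n+t} ± H^{l,m,t}‖² (both sign choices). Then the compressed-domain response c^{comp}(l, m, n) := Σ_{t=0}^{N−1} ⟨φ(S_{n+t}),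 φ(H^{l,m,t})⟩ satisfies c(l, m, n) − N·ε ≤ c^{comp}(l, m, n) ≤ c(l, m, n) + N·ε. -/

import Mathlib

open scoped RealInnerProductSpace

lemma sum_shift' (P L : ℕ) (l : ℤ) (hl0 : 0 ≤ l) (hlP : l ≤ (P:ℤ) - L)
    (F : ℤ → ℝ) (hF : ∀ α : ℤ, ¬(l ≤ α ∧ α < l + L) → F α = 0) :
    ∑ α : Fin P, F α = ∑ x ∈ Finset.range L, F (l + x) := by
  set a := l.toNat with ha'
  have ha : (a:ℤ) = l := Int.toNat_of_nonneg hl0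
  have haL : a + L ≤ P := by omega
  rw [Fin.sum_univ_eq_sum_range (fun α => F α) P]
  have hsub : Finset.Ico a (a + L) ⊆ Finset.range P := by
    intro i hi
    simp only [Finset.mem_Ico] at hi
    simp only [Finset.mem_range]
    omega
  have h1 : ∑ i ∈ Finset.range P, F i = ∑ i ∈ Finset.Ico a (a + L), F i := by
    refine (Finset.sum_subset hsub ?_).symm
    intro i hi hni
    simp only [Finset.mem_range] at hi
    simp only [Finset.mem_Ico] at hni
    apply hF
    omega
  rw [h1, Finset.sum_Ico_eq_sum_range]
  simp only [Nat.add_sub_cancel_left]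
  apply Finset.sum_congr rfl
  intro x _
  congr 1
  push_cast
  omega

set_option maxHeartbeats 1000000 in
theorem stmt_6 (P Q L M N K : ℕ) (hLP : L ≤ P) (hMQ : M ≤ Q)
    (s H : ℤ × ℤ × ℤ → ℝ)
    (hH : ∀ x y t : ℤ,
      ¬(0 ≤ x ∧ x < (L : ℤ) ∧ 0 ≤ y ∧ y < (M : ℤ) ∧ 0 ≤ t ∧ t < (N : ℤ)) →
      H (x, y, t) = 0)
    (l m n : ℤ) (hl0 : 0 ≤ l) (hlP : l ≤ (P : ℤ) - (L : ℤ))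
    (hm0 : 0 ≤ m) (hmQ : m ≤ (Q : ℤ) - (M : ℤ))
    (c : ℝ)
    (hc : c = ∑ t ∈ Finset.range N, ∑ y ∈ Finset.range M, ∑ x ∈ Finset.range L,
      s (l + (x : ℤ), m + (y : ℤ), n + (t : ℤ)) * H ((x : ℤ), (y : ℤ), (t : ℤ)))
    (S Hv : ℕ → EuclideanSpace ℝ (Fin P × Fin Q))
    (hS : ∀ t < N, ∀ α : Fin P, ∀ β : Fin Q,
      S t (α, β) = s ((α : ℤ), (β : ℤ), n + (t : ℤ)))
    (hHv : ∀ t < N, ∀ α : Fin P, ∀ β : Fin Q,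
      Hv t (α, β) = H ((α : ℤ) - l, (β : ℤ) - m, (t : ℤ)))
    (hSnorm : ∀ t < N, ‖S t‖ ≤ 1) (hHnorm : ∀ t < N, ‖Hv t‖ ≤ 1)
    (φ : EuclideanSpace ℝ (Fin P × Fin Q) →ₗ[ℝ] EuclideanSpace ℝ (Fin K))
    (ε : ℝ) (hε0 : 0 < ε) (hε1 : ε < 1)
    (hJLsub : ∀ t < N, (1 - ε) * ‖S t - Hv t‖ ^ 2 ≤ ‖φ (S t) - φ (Hv t)‖ ^ 2 ∧
      ‖φ (S t) - φ (Hv t)‖ ^ 2 ≤ (1 + ε) * ‖S t - Hv t‖ ^ 2)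
    (hJLadd : ∀ t < N, (1 - ε) * ‖S t + Hv t‖ ^ 2 ≤ ‖φ (S t) + φ (Hv t)‖ ^ 2 ∧
      ‖φ (S t) + φ (Hv t)‖ ^ 2 ≤ (1 + ε) * ‖S t + Hv t‖ ^ 2) :
    c - N * ε ≤ (∑ t ∈ Finset.range N, ⟪φ (S t), φ (Hv t)⟫) ∧
      (∑ t ∈ Finset.range N, ⟪φ (S t), φ (Hv t)⟫) ≤ c + N * ε := by
  -- Step 1: c is the sum of inner products in the pixel domain
  have hinner : ∀ t ∈ Finset.range N, ⟪S t, Hv t⟫ =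
      ∑ y ∈ Finset.range M, ∑ x ∈ Finset.range L,
        s (l + (x : ℤ), m + (y : ℤ), n + (t : ℤ)) * H ((x : ℤ), (y : ℤ), (t : ℤ)) := by
    intro t ht
    rw [Finset.mem_range] at ht
    have h1 : ⟪S t, Hv t⟫ = ∑ α : Fin P, ∑ β : Fin Q,
        s ((α : ℤ), (β : ℤ), n + (t : ℤ)) * H ((α : ℤ) - l, (β : ℤ) - m, (t : ℤ)) := by
      rw [PiLp.inner_apply]
      rw [Fintype.sum_prod_type]
      apply Finset.sum_congr rfl
      intro α _
      apply Finset.sum_congr rfl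
      intro β _
      rw [RCLike.inner_apply, starRingEnd_apply, star_trivial, hS t ht α β, hHv t ht α β]
      ring
    rw [h1]
    have h2 : ∀ α : Fin P, (∑ β : Fin Q,
        s ((α : ℤ), (β : ℤ), n + (t : ℤ)) * H ((α : ℤ) - l, (β : ℤ) - m, (t : ℤ))) =
        ∑ y ∈ Finset.range M,
          s ((α : ℤ), m + (y : ℤ), n + (t : ℤ)) * H ((α : ℤ) - l, (y : ℤ), (t : ℤ)) := by
      intro α
      have := sum_shift' Q M m hm0 hmQ
        (fun β => s ((α : ℤ), β, n + (t : ℤ)) * H ((α : ℤ) - l, β - m, (t : ℤ)))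
        (by
          intro β hβ
          rw [hH _ _ _ (by omega)]
          ring)
      rw [this]
      apply Finset.sum_congr rfl
      intro y _
      congr 2
      ring
    have h3 : (∑ α : Fin P, ∑ β : Fin Q,
        s ((α : ℤ), (β : ℤ), n + (t : ℤ)) * H ((α : ℤ) - l, (β : ℤ) - m, (t : ℤ))) =
        ∑ x ∈ Finset.range L, ∑ y ∈ Finset.range M,
          s (l + (x : ℤ), m + (y : ℤ), n + (t : ℤ)) * H ((x : ℤ), (y : ℤ), (t : ℤ)) := by
      rw [Finset.sum_congr rfl (fun α _ => h2 α)]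
      have := sum_shift' P L l hl0 hlP
        (fun α => ∑ y ∈ Finset.range M,
          s (α, m + (y : ℤ), n + (t : ℤ)) * H (α - l, (y : ℤ), (t : ℤ)))
        (by
          intro α hα
          apply Finset.sum_eq_zero
          intro y _
          rw [hH _ _ _ (by omega)]
          ring)
      rw [this]
      apply Finset.sum_congr rfl
      intro x _
      apply Finset.sum_congr rfl
      intro y _
      congr 2
      ring
    rw [h3, Finset.sum_comm]
  have hcsum : c = ∑ t ∈ Finset.range N, ⟪S t, Hv t⟫ := by
    rw [hc]
    exact (Finset.sum_congr rfl hinner).symm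
  -- Step 2: per-term bound
  have key : ∀ t ∈ Finset.range N,
      ⟪S t, Hv t⟫ - ε ≤ ⟪φ (S t), φ (Hv t)⟫ ∧ ⟪φ (S t), φ (Hv t)⟫ ≤ ⟪S t, Hv t⟫ + ε := by
    intro t ht
    rw [Finset.mem_range] at ht
    have e1 := norm_add_sq_real (S t) (Hv t)
    have e2 := norm_sub_sq_real (S t) (Hv t)
    have e3 := norm_add_sq_real (φ (S t)) (φ (Hv t))
    have e4 := norm_sub_sq_real (φ (S t)) (φ (Hv t))
    have hs1 := hSnorm t ht
    have hs2 := hHnorm t ht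
    have hs1' : (0:ℝ) ≤ ‖S t‖ := norm_nonneg _
    have hs2' : (0:ℝ) ≤ ‖Hv t‖ := norm_nonneg _
    obtain ⟨ja1, ja2⟩ := hJLadd t ht
    obtain ⟨js1, js2⟩ := hJLsub t ht
    set a := ‖S t‖ with ha
    set b := ‖Hv t‖ with hb
    set A := ‖S t + Hv t‖ with hA
    set B := ‖S t - Hv t‖ with hB
    set A' := ‖φ (S t) + φ (Hv t)‖ with hA'
    set B' := ‖φ (S t) - φ (Hv t)‖ with hB'
    set I := ⟪S t, Hv t⟫ with hI
    set J := ⟪φ (S t), φ (Hv t)⟫ with hJ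
    clear_value a b A B A' B' I J
    have hq1 : a ^ 2 ≤ 1 := by nlinarith
    have hq2 : b ^ 2 ≤ 1 := by nlinarith
    have hp1 : 0 ≤ ε * (1 - a ^ 2) := mul_nonneg hε0.le (by linarith)
    have hp2 : 0 ≤ ε * (1 - b ^ 2) := mul_nonneg hε0.le (by linarith)
    constructor <;> nlinarith [hp1, hp2, ja1, ja2, js1, js2, e1, e2, e3, e4]
  -- Step 3: sum up
  rw [hcsum]
  constructor
  · calc (∑ t ∈ Finset.range N, ⟪S t, Hv t⟫) - N * ε
        = ∑ t ∈ Finset.range N, (⟪S t, Hv t⟫ - ε) := by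
          rw [Finset.sum_sub_distrib, Finset.sum_const, Finset.card_range, nsmul_eq_mul]
      _ ≤ _ := Finset.sum_le_sum (fun t ht => (key t ht).1)
  · calc (∑ t ∈ Finset.range N, ⟪φ (S t), φ (Hv t)⟫)
        ≤ ∑ t ∈ Finset.range N, (⟪S t, Hv t⟫ + ε) :=
          Finset.sum_le_sum (fun t ht => (key t ht).2)
      _ = (∑ t ∈ Finset.range N, ⟪S t, Hv t⟫) + N * ε := by
          rw [Finset.sum_add_distrib, Finset.sum_const, Finset.card_range, nsmul_eq_mul]
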